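/- Under identity removal, if (g,≺) is a gflow for (G,I,O,λ) and u,v ∈ V∖O, w ∈ V satisfy N_G(v) = {u,w}, u ∉ N_G(w), and λ(u),λ(v) ≠ YZ, then the labelled open graph on G ⋊_v w := ((G∧uv)∖{u})∖{v} (with I, O, and λ restricted) has a gflow. -/

import Mathlib

open Set

/-- The three measurement planes. -/
inductive MPlane | XY | XZ | YZ
deriving DecidableEq

/-- The odd neighbourhood of a set `K`: vertices with an odd number of neighbours in `K`. -/
def oddNbhd {V : Type*} (G : SimpleGraph V) (K : Set V) : Set V :=
  {u | Odd (K ∩ G.neighborSet u).ncard}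

/-- `(g, prec)` is a gflow for the labelled open graph `(G, I, O, lam)`. -/
structure GFlow {V : Type*} (G : SimpleGraph V) (I O : Set V) (lam : V → MPlane)
    (g : V → Set V) (prec : V → V → Prop) : Prop where
  irrefl : ∀ v, ¬ prec v v
  trans : ∀ u v w, prec u v → prec v w → prec u w
  noInput : ∀ v, v ∉ O → g v ∩ I = ∅
  g1 : ∀ v, v ∉ O → ∀ w ∈ g v, w ≠ v → prec v w
  g2 : ∀ v, v ∉ O → ∀ w ∈ oddNbhd G (g v), w ≠ v → prec v w
  gXY : ∀ v, v ∉ O → lam v = MPlane.XY → v ∉ g v ∧ v ∈ oddNbhd G (g v)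
  gXZ : ∀ v, v ∉ O → lam v = MPlane.XZ → v ∈ g v ∧ v ∈ oddNbhd G (g v)
  gYZ : ∀ v, v ∉ O → lam v = MPlane.YZ → v ∈ g v ∧ v ∉ oddNbhd G (g v)

/-- Local complementation of `G` about the vertex `u`: complement the edges
among the neighbours of `u`. -/
def localComp {V : Type*} (G : SimpleGraph V) (u : V) : SimpleGraph V where
  Adj x y := x ≠ y ∧ Xor' (G.Adj x y) (G.Adj u x ∧ G.Adj u y)
  symm := by
    constructor
    rintro x y ⟨hxy, h⟩
    refine ⟨hxy.symm, ?_⟩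
    rw [G.adj_comm y x, and_comm]
    exact h
  loopless := by constructor; rintro x ⟨h, _⟩; exact h rfl

/-- The pivot of `G` about the edge `u ∼ v`. -/
def pivot {V : Type*} (G : SimpleGraph V) (u v : V) : SimpleGraph V :=
  localComp (localComp (localComp G u) v) u

/-! ### Auxiliary lemmas -/

open scoped symmDiff

section Parity

variable {V : Type*} [Fintype V]

lemma odd_ncard_symmDiff (A B : Set V) :
    Odd (A ∆ B).ncard ↔ Xor' (Odd A.ncard) (Odd B.ncard) := by
  classical
  have h1 : (A ∆ B).ncard = (A \ B).ncard + (B \ A).ncard := by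
    rw [Set.symmDiff_def]
    exact Set.ncard_union_eq disjoint_sdiff_sdiff (A \ B).toFinite (B \ A).toFinite
  have h2 := Set.ncard_inter_add_ncard_diff_eq_ncard A B A.toFinite
  have h3 := Set.ncard_inter_add_ncard_diff_eq_ncard B A B.toFinite
  have h4 : (A ∩ B).ncard = (B ∩ A).ncard := by rw [Set.inter_comm]
  rw [Nat.odd_iff, Nat.odd_iff, Nat.odd_iff, Xor', Xor]
  constructor <;> intro h <;> omega

lemma odd_ncard_inter_insert (K : Set V) (a : V) (s : Set V) (ha : a ∉ s) :
    Odd ((K ∩ insert a s).ncard) ↔ Xor' (a ∈ K) (Odd (K ∩ s).ncard) := by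
  classical
  by_cases haK : a ∈ K
  · have e : K ∩ insert a s = insert a (K ∩ s) := by
      ext y; simp only [mem_inter_iff, mem_insert_iff]
      constructor
      · rintro ⟨hy, rfl | hy2⟩
        · exact Or.inl rfl
        · exact Or.inr ⟨hy, hy2⟩
      · rintro (rfl | ⟨h1, h2⟩)
        · exact ⟨haK, Or.inl rfl⟩
        · exact ⟨h1, Or.inr h2⟩
    rw [e, Set.ncard_insert_of_notMem (by simp [ha]) (K ∩ s).toFinite]
    rw [Nat.odd_add_one]
    simp [Xor', haK, Nat.not_odd_iff_even]
  · have e : K ∩ insert a s = K ∩ s := by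
      ext y; simp only [mem_inter_iff, mem_insert_iff]
      constructor
      · rintro ⟨hy, rfl | hy2⟩
        · exact absurd hy haK
        · exact ⟨hy, hy2⟩
      · rintro ⟨h1, h2⟩; exact ⟨h1, Or.inr h2⟩
    rw [e]; simp [Xor', haK]

lemma odd_ncard_inter_singleton (K : Set V) (a : V) :
    Odd ((K ∩ {a}).ncard) ↔ a ∈ K := by
  have := odd_ncard_inter_insert K a ∅ (by simp)
  simpa [Xor', Xor] using this

lemma xor_assoc' (a b c : Prop) : Xor' (Xor' a b) c ↔ Xor' a (Xor' b c) := by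
  unfold Xor' Xor; tauto

end Parity

/-- A "guarded" set: `S` if `c` holds, `∅` otherwise. -/
def cors {V : Type*} (c : Prop) (S : Set V) : Set V := {x | c ∧ x ∈ S}

section OddNbhd

variable {V : Type*} [Fintype V] (G : SimpleGraph V)

lemma mem_oddNbhd_iff (K : Set V) (x : V) :
    x ∈ oddNbhd G K ↔ Odd ((K ∩ G.neighborSet x).ncard) := Iff.rfl

lemma cors_true {c : Prop} (S : Set V) (h : c) : cors c S = S := by
  ext y; simp [cors, h]

lemma cors_false {c : Prop} (S : Set V) (h : ¬ c) : cors c S = ∅ := by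
  ext y; simp [cors, h]

lemma odd_ncard_inter_cors (K : Set V) (c : Prop) (S : Set V) :
    Odd ((K ∩ cors c S).ncard) ↔ c ∧ Odd ((K ∩ S).ncard) := by
  by_cases hc : c
  · rw [cors_true S hc]; simp [hc]
  · rw [cors_false S hc]; simp [hc]

lemma mem_oddNbhd_symmDiff (K L : Set V) (x : V) :
    x ∈ oddNbhd G (K ∆ L) ↔ Xor' (x ∈ oddNbhd G K) (x ∈ oddNbhd G L) := by
  rw [mem_oddNbhd_iff, mem_oddNbhd_iff, mem_oddNbhd_iff]
  have e : (K ∆ L) ∩ G.neighborSet x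
      = (K ∩ G.neighborSet x) ∆ (L ∩ G.neighborSet x) :=
    inf_symmDiff_distrib_right K L _
  rw [e]; exact odd_ncard_symmDiff _ _

lemma mem_oddNbhd_cors (c : Prop) (S : Set V) (x : V) :
    x ∈ oddNbhd G (cors c S) ↔ c ∧ x ∈ oddNbhd G S := by
  by_cases hc : c
  · rw [cors_true S hc]; simp [hc]
  · rw [cors_false S hc]; simp [hc, mem_oddNbhd_iff]

lemma mem_oddNbhd_singleton (t x : V) :
    x ∈ oddNbhd G {t} ↔ G.Adj x t := by
  rw [mem_oddNbhd_iff, Set.inter_comm, odd_ncard_inter_singleton]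
  simp

end OddNbhd

section PivotLemmas

variable {V : Type*} (G : SimpleGraph V) (u v w : V)
  (hN : G.neighborSet v = {u, w}) (hw : u ∉ G.neighborSet w)

include hN in
lemma adj_v_iff : ∀ z, G.Adj v z ↔ (z = u ∨ z = w) := by
  intro z
  rw [← SimpleGraph.mem_neighborSet, hN]; simp

set_option maxHeartbeats 1000000 in
include hN hw in
lemma pivAdj {x y : V} (hxu : x ≠ u) (hxv : x ≠ v) (hyu : y ≠ u) (hyv : y ≠ v) :
    (pivot G u v).Adj x y ↔
      (x ≠ y ∧ Xor' (G.Adj x y) (Xor' (x = w ∧ G.Adj u y) (y = w ∧ G.Adj u x))) := by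
  have hvz := adj_v_iff G u v w hN
  have huv : G.Adj u v := ((hvz u).mpr (Or.inl rfl)).symm
  have huw : ¬ G.Adj u w := fun hh => hw hh.symm
  have hnuv : u ≠ v := huv.ne
  have hnvu : v ≠ u := huv.ne'
  have hvw' : G.Adj v w := (hvz w).mpr (Or.inr rfl)
  have hwv : G.Adj w v := hvw'.symm
  simp only [pivot, localComp, SimpleGraph.Adj]
  by_cases hxy : x = y
  · simp [hxy]
  by_cases hA : G.Adj x y <;> by_cases hux : G.Adj u x <;> by_cases huy : G.Adj u y <;>
    by_cases hxw : x = w <;> by_cases hyw : y = w <;>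
      simp_all [Xor', Xor, hvz, G.adj_comm x u, G.adj_comm y u, G.adj_comm x v, G.adj_comm y v,
        G.adj_comm v u] <;> tauto

set_option maxHeartbeats 1000000 in
include hN hw in
lemma pivAdj_xu {x : V} (hxu : x ≠ u) (hxv : x ≠ v) :
    (pivot G u v).Adj x u ↔ x = w := by
  have hvz := adj_v_iff G u v w hN
  have huv : G.Adj u v := ((hvz u).mpr (Or.inl rfl)).symm
  have huw : ¬ G.Adj u w := fun hh => hw hh.symm
  have hnuv : u ≠ v := huv.ne
  have hvw' : G.Adj v w := (hvz w).mpr (Or.inr rfl)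
  have hwv : G.Adj w v := hvw'.symm
  simp only [pivot, localComp, SimpleGraph.Adj]
  by_cases hux : G.Adj u x <;> by_cases hxw : x = w <;>
    simp_all [Xor', Xor, hvz, G.adj_comm x u, G.adj_comm x v, G.adj_comm v u] <;> tauto

set_option maxHeartbeats 1000000 in
include hN hw in
lemma pivAdj_xv {x : V} (hxu : x ≠ u) (hxv : x ≠ v) :
    (pivot G u v).Adj x v ↔ G.Adj u x := by
  have hvz := adj_v_iff G u v w hN
  have huv : G.Adj u v := ((hvz u).mpr (Or.inl rfl)).symm
  have huw : ¬ G.Adj u w := fun hh => hw hh.symm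
  have hnuv : u ≠ v := huv.ne
  have hvw' : G.Adj v w := (hvz w).mpr (Or.inr rfl)
  have hwv : G.Adj w v := hvw'.symm
  simp only [pivot, localComp, SimpleGraph.Adj]
  by_cases hux : G.Adj u x <;> by_cases hxw : x = w <;>
    simp_all [Xor', Xor, hvz, G.adj_comm x u, G.adj_comm x v, G.adj_comm v u] <;> tauto

include hN hw in
lemma pivot_nbhd_ne {x : V} (hxu : x ≠ u) (hxv : x ≠ v) (hxw : x ≠ w) :
    (pivot G u v).neighborSet x = G.neighborSet x ∆ cors (G.Adj u x) {u, v, w} := by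
  have hvz := adj_v_iff G u v w hN
  have huv : G.Adj u v := ((hvz u).mpr (Or.inl rfl)).symm
  ext y
  rw [SimpleGraph.mem_neighborSet, Set.mem_symmDiff]
  rcases eq_or_ne u y with rfl | hyu
  · rw [pivAdj_xu G u v w hN hw hxu hxv]
    have h1 : u ∈ G.neighborSet x ↔ G.Adj u x := by
      rw [SimpleGraph.mem_neighborSet, G.adj_comm]
    have h2 : u ∈ cors (G.Adj u x) ({u, v, w} : Set V) ↔ G.Adj u x := by simp [cors]
    simp only [h1, h2, hxw]
    tauto
  · rcases eq_or_ne v y with rfl | hyv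
    · rw [pivAdj_xv G u v w hN hw hxu hxv]
      have h1 : v ∈ G.neighborSet x ↔ False := by
        simp only [SimpleGraph.mem_neighborSet, iff_false]
        intro hh
        rw [G.adj_comm, hvz x] at hh
        rcases hh with rfl | rfl
        · exact hxu rfl
        · exact hxw rfl
      have h2 : v ∈ cors (G.Adj u x) ({u, v, w} : Set V) ↔ G.Adj u x := by simp [cors]
      simp only [h1, h2]
      tauto
    · rw [pivAdj G u v w hN hw hxu hxv (Ne.symm hyu) (Ne.symm hyv)]
      have h1 : y ∈ G.neighborSet x ↔ G.Adj x y := Iff.rfl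
      have h2 : y ∈ cors (G.Adj u x) ({u, v, w} : Set V) ↔ (G.Adj u x ∧ y = w) := by
        simp only [cors, mem_setOf_eq, mem_insert_iff, mem_singleton_iff]
        constructor
        · rintro ⟨ha, rfl | rfl | rfl⟩
          · exact absurd rfl hyu.symm
          · exact absurd rfl hyv.symm
          · exact ⟨ha, rfl⟩
        · rintro ⟨ha, rfl⟩; exact ⟨ha, Or.inr (Or.inr rfl)⟩
      by_cases hxy : x = y
      · have hA : ¬ G.Adj x y := by rw [hxy]; exact G.loopless.irrefl y
        have hyw : y ≠ w := by rw [← hxy]; exact hxw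
        have r1 : y ∉ G.neighborSet x := hA
        have r2 : y ∉ cors (G.Adj u x) ({u, v, w} : Set V) := by
          rw [h2]; rintro ⟨_, rfl⟩; exact hyw rfl
        constructor
        · rintro ⟨hne, _⟩; exact absurd hxy hne
        · rintro (⟨hy1, _⟩ | ⟨hy2, _⟩)
          · exact absurd hy1 r1
          · exact absurd hy2 r2
      · simp only [h1, h2, hxw, Xor', Xor, hxy]
        tauto

include hN hw in
lemma pivot_nbhd_w (hwu : w ≠ u) (hwv : w ≠ v) :
    (pivot G u v).neighborSet w = (G.neighborSet w ∆ G.neighborSet u) ∆ {u} := by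
  have hvz := adj_v_iff G u v w hN
  have huv : G.Adj u v := ((hvz u).mpr (Or.inl rfl)).symm
  have huw : ¬ G.Adj u w := fun hh => hw hh.symm
  have hwu' : ¬ G.Adj w u := hw
  have hwv' : G.Adj w v := ((hvz w).mpr (Or.inr rfl)).symm
  ext y
  rw [SimpleGraph.mem_neighborSet, Set.mem_symmDiff, Set.mem_symmDiff]
  rcases eq_or_ne u y with rfl | hyu
  · rw [pivAdj_xu G u v w hN hw hwu hwv]
    simp only [SimpleGraph.mem_neighborSet, mem_singleton_iff]
    simp [hwu', G.loopless.irrefl u]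
  · rcases eq_or_ne v y with rfl | hyv
    · rw [pivAdj_xv G u v w hN hw hwu hwv]
      simp only [SimpleGraph.mem_neighborSet, mem_singleton_iff]
      simp [hwv', huv, huw, Ne.symm huv.ne]
    · rw [pivAdj G u v w hN hw hwu hwv (Ne.symm hyu) (Ne.symm hyv)]
      simp only [SimpleGraph.mem_neighborSet, mem_singleton_iff]
      by_cases hwy : w = y
      · have hA : ¬ G.Adj w y := by rw [← hwy]; exact G.loopless.irrefl w
        have hA2 : ¬ G.Adj u y := by rw [← hwy]; exact huw
        have r1 : y ∉ G.neighborSet w := hA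
        have r2 : y ∉ G.neighborSet u := hA2
        have r3 : y ∉ ({u} : Set V) := by simp [Ne.symm hyu]
        constructor
        · rintro ⟨hne, _⟩; exact absurd hwy hne
        · rintro (⟨(⟨hy1, _⟩ | ⟨hy2, _⟩), _⟩ | ⟨hy3, _⟩)
          · exact absurd hy1 r1
          · exact absurd hy2 r2
          · exact absurd hy3 r3
      · have hyw' : ¬ y = w := fun hh => hwy hh.symm
        have hyu' : ¬ y = u := fun hh => hyu hh.symm
        have hww : w = w := rfl
        simp only [Xor', Xor]
        tauto

end PivotLemmas

section OddPivot

variable {V : Type*} [Fintype V] (G : SimpleGraph V) (u v w : V)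
  (hN : G.neighborSet v = {u, w}) (hw : u ∉ G.neighborSet w)

include hN hw in
lemma oddPiv_ne (K : Set V) {x : V} (hxu : x ≠ u) (hxv : x ≠ v) (hxw : x ≠ w) :
    x ∈ oddNbhd (pivot G u v) K ↔
      Xor' (x ∈ oddNbhd G K) (G.Adj u x ∧ Odd ((K ∩ ({u, v, w} : Set V)).ncard)) := by
  rw [mem_oddNbhd_iff, pivot_nbhd_ne G u v w hN hw hxu hxv hxw]
  have e : K ∩ (G.neighborSet x ∆ cors (G.Adj u x) {u, v, w})
      = (K ∩ G.neighborSet x) ∆ (K ∩ cors (G.Adj u x) {u, v, w}) :=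
    inf_symmDiff_distrib_left K _ _
  rw [e, odd_ncard_symmDiff, mem_oddNbhd_iff, odd_ncard_inter_cors]

include hN hw in
lemma oddPiv_w (K : Set V) (hwu : w ≠ u) (hwv : w ≠ v) :
    w ∈ oddNbhd (pivot G u v) K ↔
      Xor' (w ∈ oddNbhd G K) (Xor' (u ∈ oddNbhd G K) (u ∈ K)) := by
  rw [mem_oddNbhd_iff, pivot_nbhd_w G u v w hN hw hwu hwv]
  have e1 : K ∩ ((G.neighborSet w ∆ G.neighborSet u) ∆ {u})
      = (K ∩ (G.neighborSet w ∆ G.neighborSet u)) ∆ (K ∩ {u}) :=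
    inf_symmDiff_distrib_left K _ _
  have e2 : K ∩ (G.neighborSet w ∆ G.neighborSet u)
      = (K ∩ G.neighborSet w) ∆ (K ∩ G.neighborSet u) :=
    inf_symmDiff_distrib_left K _ _
  rw [e1, odd_ncard_symmDiff, e2, odd_ncard_symmDiff, odd_ncard_inter_singleton,
    mem_oddNbhd_iff, mem_oddNbhd_iff]
  exact xor_assoc' _ _ _

include hN in
lemma odd_v_iff (K : Set V) :
    v ∈ oddNbhd G K ↔ Xor' (u ∈ K) (w ∈ K ∧ w ≠ u) := by
  rw [mem_oddNbhd_iff, hN]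
  by_cases hwu : w = u
  · subst hwu
    have e : ({w, w} : Set V) = {w} := by simp
    rw [e, odd_ncard_inter_singleton]
    simp [Xor', Xor]
  · have e : ({u, w} : Set V) = insert u {w} := rfl
    rw [e, odd_ncard_inter_insert K u {w} (by simp [Ne.symm hwu]),
      odd_ncard_inter_singleton]
    simp only [Xor', Xor]
    tauto

end OddPivot

/-- The corrected version of `g` after pivoting: erase `u` and `v` from `g z` and
insert whichever of `u, v` lies in the odd neighbourhood of `g z`. -/
def gmod {V : Type*} (G : SimpleGraph V) (u v : V) (g : V → Set V) (z : V) : Set V :=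
  (g z ∆ cors (Xor' (u ∈ g z) (u ∈ oddNbhd G (g z))) {u}) ∆
    cors (Xor' (v ∈ g z) (v ∈ oddNbhd G (g z))) {v}

section Gmod

variable {V : Type*} [Fintype V] (G : SimpleGraph V) (u v w : V) (g : V → Set V)

lemma mem_gmod_ne {y : V} (z : V) (hyu : y ≠ u) (hyv : y ≠ v) :
    y ∈ gmod G u v g z ↔ y ∈ g z := by
  simp [gmod, Set.mem_symmDiff, cors, hyu, hyv]

lemma mem_gmod_u (hnuv : u ≠ v) (z : V) :
    u ∈ gmod G u v g z ↔ u ∈ oddNbhd G (g z) := by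
  simp only [gmod, Set.mem_symmDiff, cors, mem_setOf_eq, mem_singleton_iff, hnuv,
    and_false, Xor', Xor]
  tauto

lemma mem_gmod_v (hnuv : u ≠ v) (z : V) :
    v ∈ gmod G u v g z ↔ v ∈ oddNbhd G (g z) := by
  simp only [gmod, Set.mem_symmDiff, cors, mem_setOf_eq, mem_singleton_iff, Ne.symm hnuv,
    and_false, Xor', Xor]
  tauto

lemma mem_oddNbhd_gmod (z y : V) :
    y ∈ oddNbhd G (gmod G u v g z) ↔
      Xor' (y ∈ oddNbhd G (g z))
        (Xor' ((Xor' (u ∈ g z) (u ∈ oddNbhd G (g z))) ∧ G.Adj y u)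
          ((Xor' (v ∈ g z) (v ∈ oddNbhd G (g z))) ∧ G.Adj y v)) := by
  rw [gmod, mem_oddNbhd_symmDiff, mem_oddNbhd_symmDiff, mem_oddNbhd_cors, mem_oddNbhd_cors,
    mem_oddNbhd_singleton, mem_oddNbhd_singleton]
  exact xor_assoc' _ _ _

end Gmod

section P2

variable {V : Type*} [Fintype V] (G : SimpleGraph V) (u v w : V)
  (hN : G.neighborSet v = {u, w}) (hw : u ∉ G.neighborSet w) (g : V → Set V)

set_option maxHeartbeats 1000000 in
include hN hw in
lemma gmod_parity (z : V) :
    Odd (((gmod G u v g z) ∩ ({u, v, w} : Set V)).ncard)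
      ↔ Xor' (u ∈ g z) (u ∈ oddNbhd G (g z)) := by
  have hvz := adj_v_iff G u v w hN
  have huv : G.Adj u v := ((hvz u).mpr (Or.inl rfl)).symm
  have hnuv : u ≠ v := huv.ne
  have hq := odd_v_iff G u v w hN (g z)
  by_cases hwu : w = u
  · have e : ({u, v, w} : Set V) = insert u {v} := by
      rw [hwu]; ext t; simp; tauto
    rw [e, odd_ncard_inter_insert _ u {v} (by simp [hnuv]),
      odd_ncard_inter_singleton, mem_gmod_u G u v g hnuv z, mem_gmod_v G u v g hnuv z]
    rw [hq]
    simp only [Xor', Xor, hwu]; tauto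
  · have hwv : w ≠ v := by
      intro hh
      exact G.loopless.irrefl v (hh ▸ ((hvz w).mpr (Or.inr rfl)))
    have e : ({u, v, w} : Set V) = insert u (insert v {w}) := rfl
    rw [e, odd_ncard_inter_insert _ u _ (by simp [hnuv, Ne.symm hwu]),
      odd_ncard_inter_insert _ v _ (by simp [Ne.symm hwv]),
      odd_ncard_inter_singleton, mem_gmod_u G u v g hnuv z, mem_gmod_v G u v g hnuv z,
      mem_gmod_ne G u v g z hwu hwv, hq]
    simp only [Xor', Xor, hwu]; tauto

set_option maxHeartbeats 1600000 in
include hN hw in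
lemma oddPiv_gmod (z : V) {x : V} (hxu : x ≠ u) (hxv : x ≠ v) :
    x ∈ oddNbhd (pivot G u v) (gmod G u v g z) ↔ x ∈ oddNbhd G (g z) := by
  have hvz := adj_v_iff G u v w hN
  have huv : G.Adj u v := ((hvz u).mpr (Or.inl rfl)).symm
  have hnuv : u ≠ v := huv.ne
  have huw : ¬ G.Adj u w := fun hh => hw hh.symm
  have hmo := mem_oddNbhd_gmod G u v g z
  by_cases hxw : x = w
  · have hwu : w ≠ u := by rw [← hxw]; exact hxu
    have hwv : w ≠ v := by rw [← hxw]; exact hxv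
    rw [hxw]
    rw [oddPiv_w G u v w hN hw (gmod G u v g z) hwu hwv]
    have e1 := hmo w
    have e2 := hmo u
    have e3 := mem_gmod_u G u v g hnuv z
    have hadjwu : ¬ G.Adj w u := hw
    have hadjwv : G.Adj w v := ((hvz w).mpr (Or.inr rfl)).symm
    have hadjuu : ¬ G.Adj u u := fun hh => G.loopless.irrefl u hh
    rw [e1, e2, e3]
    simp only [hadjwu, hadjwv, hadjuu, huv, and_false, and_true, false_and]
    by_cases h1 : w ∈ oddNbhd G (g z) <;> by_cases h2 : u ∈ oddNbhd G (g z) <;>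
      by_cases h3 : u ∈ g z <;> by_cases h4 : v ∈ g z <;>
        by_cases h5 : v ∈ oddNbhd G (g z) <;>
          simp [h1, h2, h3, h4, h5, Xor', Xor]
  · rw [oddPiv_ne G u v w hN hw (gmod G u v g z) hxu hxv hxw]
    have e1 := hmo x
    have hadjxv : ¬ G.Adj x v := by
      rw [G.adj_comm, hvz x]; push_neg; exact ⟨hxu, hxw⟩
    have hadjc : G.Adj x u ↔ G.Adj u x := G.adj_comm x u
    rw [gmod_parity G u v w hN hw g z, e1]
    simp only [hadjxv, and_false, hadjc]
    by_cases h1 : x ∈ oddNbhd G (g z) <;> by_cases h2 : u ∈ oddNbhd G (g z) <;>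
      by_cases h3 : u ∈ g z <;> by_cases h4 : v ∈ g z <;>
        by_cases h5 : v ∈ oddNbhd G (g z) <;> by_cases h6 : G.Adj u x <;>
          simp [h1, h2, h3, h4, h5, h6, Xor', Xor]

end P2

lemma xor_elim {a b : Prop} (h : Xor' a b) : a ∨ b := h.imp And.left And.left

lemma xor_iff_left {a b : Prop} (hb : ¬ b) : Xor' a b ↔ a := by unfold Xor' Xor; tauto

lemma mem_symmDiff_cors {V : Type*} (S T : Set V) (c : Prop) (y : V) :
    y ∈ S ∆ cors c T ↔ Xor' (y ∈ S) (c ∧ y ∈ T) := by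
  rw [Set.mem_symmDiff]; exact Iff.rfl

/-- Identity removal preserves the existence of gflow: if `v` has exactly the
neighbours `u` and `w`, `u ∉ N(w)`, and `λ(u), λ(v) ≠ YZ`, then the labelled
open graph on `G ⋊_v w := ((G ∧ uv) ∖ {u}) ∖ {v}` has a gflow. -/
theorem gflow_identity_removal {V : Type*} [Fintype V]
    (G : SimpleGraph V) (I O : Set V) (lam : V → MPlane)
    (g : V → Set V) (prec : V → V → Prop)
    (h : GFlow G I O lam g prec) (u v w : V) (hu : u ∉ O) (hv : v ∉ O)
    (hN : G.neighborSet v = {u, w}) (hw : u ∉ G.neighborSet w)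
    (hlu : lam u ≠ MPlane.YZ) (hlv : lam v ≠ MPlane.YZ) :
    ∃ (g' : ↥{x : V | x ≠ u ∧ x ≠ v} → Set ↥{x : V | x ≠ u ∧ x ≠ v})
      (prec' : ↥{x : V | x ≠ u ∧ x ≠ v} → ↥{x : V | x ≠ u ∧ x ≠ v} → Prop),
      GFlow ((pivot G u v).induce {x : V | x ≠ u ∧ x ≠ v})
        (Subtype.val ⁻¹' I) (Subtype.val ⁻¹' O)
        (fun z => lam z.val) g' prec' := by
  classical
  have hvz := adj_v_iff G u v w hN
  have huv : G.Adj u v := ((hvz u).mpr (Or.inl rfl)).symm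
  have hnuv : u ≠ v := huv.ne
  set P := pivot G u v with hP
  set S : Set V := {x : V | x ≠ u ∧ x ≠ v} with hS
  have hOu : u ∈ oddNbhd G (g u) := by
    cases hl : lam u with
    | XY => exact (h.gXY u hu hl).2
    | XZ => exact (h.gXZ u hu hl).2
    | YZ => exact absurd hl hlu
  have hOv : v ∈ oddNbhd G (g v) := by
    cases hl : lam v with
    | XY => exact (h.gXY v hv hl).2
    | XZ => exact (h.gXZ v hv hl).2
    | YZ => exact absurd hl hlv
  set g1 : V → Set V := gmod G u v g with hg1
  set M2 : V → Set V := fun z => g1 z ∆ cors (u ∈ g1 z) (g1 u) with hM2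
  set Cv : Set V := g1 v ∆ cors (u ∈ g1 v) (g1 u) with hCv
  set M3 : V → Set V := fun z => M2 z ∆ cors (v ∈ M2 z) Cv with hM3
  -- membership lemmas
  have m1 : ∀ z y, y ≠ u → y ≠ v → (y ∈ g1 z ↔ y ∈ g z) :=
    fun z y h1 h2 => mem_gmod_ne G u v g z h1 h2
  have m2 : ∀ z, u ∈ g1 z ↔ u ∈ oddNbhd G (g z) := mem_gmod_u G u v g hnuv
  have m3 : ∀ z, v ∈ g1 z ↔ v ∈ oddNbhd G (g z) := mem_gmod_v G u v g hnuv
  have meM2 : ∀ z y, y ∈ M2 z ↔ Xor' (y ∈ g1 z) (u ∈ g1 z ∧ y ∈ g1 u) :=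
    fun z y => mem_symmDiff_cors _ _ _ y
  have meCv : ∀ y, y ∈ Cv ↔ Xor' (y ∈ g1 v) (u ∈ g1 v ∧ y ∈ g1 u) :=
    fun y => mem_symmDiff_cors _ _ _ y
  have meM3 : ∀ z y, y ∈ M3 z ↔ Xor' (y ∈ M2 z) (v ∈ M2 z ∧ y ∈ Cv) :=
    fun z y => mem_symmDiff_cors _ _ _ y
  -- prec facts for the triggers
  have hpu : ∀ z, z ∉ O → z ≠ u → u ∈ g1 z → prec z u :=
    fun z hzO hzu hm => h.g2 z hzO u ((m2 z).mp hm) (Ne.symm hzu)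
  have hpv : ∀ z, z ∉ O → z ≠ v → v ∈ g1 z → prec z v :=
    fun z hzO hzv hm => h.g2 z hzO v ((m3 z).mp hm) (Ne.symm hzv)
  have hvu : u ∈ g1 v → prec v u :=
    fun hm => h.g2 v hv u ((m2 v).mp hm) hnuv
  have hu1 : u ∈ g1 u := (m2 u).mpr hOu
  have hv1 : v ∈ g1 v := (m3 v).mpr hOv
  -- `u` never lies in `M2 z` or in `Cv`
  have hnotM2u : ∀ z, u ∉ M2 z := by
    intro z hm
    rcases (meM2 z u).mp hm with ⟨ha, hn⟩ | ⟨⟨hc, _⟩, hn⟩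
    · exact hn ⟨ha, hu1⟩
    · exact hn hc
  have hnotCvu : u ∉ Cv := by
    intro hm
    rcases (meCv u).mp hm with ⟨ha, hn⟩ | ⟨⟨hc, _⟩, hn⟩
    · exact hn ⟨ha, hu1⟩
    · exact hn hc
  have hAu : ∀ z, u ∉ M3 z := by
    intro z hm
    rcases (meM3 z u).mp hm with ⟨hm2, _⟩ | ⟨⟨_, hcv⟩, _⟩
    · exact hnotM2u z hm2
    · exact hnotCvu hcv
  -- `v` always lies in `Cv`, never in `M3 z`
  have hnc : ¬ (u ∈ g1 v ∧ v ∈ g1 u) := by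
    rintro ⟨h1, h2⟩
    exact h.irrefl v (h.trans v u v (hvu h1) (h.g2 u hu v ((m3 u).mp h2) (Ne.symm hnuv)))
  have hvCv : v ∈ Cv := (meCv v).mpr (Or.inl ⟨hv1, hnc⟩)
  have hAv : ∀ z, v ∉ M3 z := by
    intro z hm
    rcases (meM3 z v).mp hm with ⟨hm2, hn⟩ | ⟨⟨hm2, _⟩, hn⟩
    · exact hn ⟨hm2, hvCv⟩
    · exact hn hm2
  -- trigger for `Cv`
  have hc2 : ∀ z, z ∉ O → z ≠ u → z ≠ v → v ∈ M2 z → prec z v := by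
    intro z hzO hzu hzv hm
    rcases xor_elim ((meM2 z v).mp hm) with hm' | ⟨hc, hm'⟩
    · exact hpv z hzO hzv hm'
    · exact h.trans z u v (hpu z hzO hzu hc)
        (h.g2 u hu v ((m3 u).mp hm') (Ne.symm hnuv))
  -- main decomposition of membership in `M3 z` into prec facts
  have hB : ∀ z, z ∉ O → z ≠ u → z ≠ v →
      ∀ y, y ∈ M3 z → y ≠ u → y ≠ v → y ≠ z → prec z y := by
    intro z hzO hzu hzv y hy hyu hyv hyz
    rcases xor_elim ((meM3 z y).mp hy) with hy' | ⟨htrig, hy'⟩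
    · rcases xor_elim ((meM2 z y).mp hy') with hy'' | ⟨hc, hy''⟩
      · exact h.g1 z hzO y ((m1 z y hyu hyv).mp hy'') hyz
      · exact h.trans z u y (hpu z hzO hzu hc)
          (h.g1 u hu y ((m1 u y hyu hyv).mp hy'') hyu)
    · have hzv' : prec z v := hc2 z hzO hzu hzv htrig
      rcases xor_elim ((meCv y).mp hy') with hy'' | ⟨hc, hy''⟩
      · exact h.trans z v y hzv' (h.g1 v hv y ((m1 v y hyu hyv).mp hy'') hyv)
      · exact h.trans z u y (h.trans z v u hzv' (hvu hc))
          (h.g1 u hu y ((m1 u y hyu hyv).mp hy'') hyu)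
  have hE : ∀ z y, y ∈ M3 z → y ≠ u → y ≠ v → (y ∈ g z ∨ y ∈ g u ∨ y ∈ g v) := by
    intro z y hy hyu hyv
    rcases xor_elim ((meM3 z y).mp hy) with hy' | ⟨_, hy'⟩
    · rcases xor_elim ((meM2 z y).mp hy') with hy'' | ⟨_, hy''⟩
      · exact Or.inl ((m1 z y hyu hyv).mp hy'')
      · exact Or.inr (Or.inl ((m1 u y hyu hyv).mp hy''))
    · rcases xor_elim ((meCv y).mp hy') with hy'' | ⟨_, hy''⟩
      · exact Or.inr (Or.inr ((m1 v y hyu hyv).mp hy''))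
      · exact Or.inr (Or.inl ((m1 u y hyu hyv).mp hy''))
  -- diagonal membership
  have hC : ∀ z, z ∉ O → z ≠ u → z ≠ v → (z ∈ M3 z ↔ z ∈ g z) := by
    intro z hzO hzu hzv
    have e2 : ¬ (u ∈ g1 z ∧ z ∈ g1 u) := by
      rintro ⟨hc, hm⟩
      exact h.irrefl z (h.trans z u z (hpu z hzO hzu hc)
        (h.g1 u hu z ((m1 u z hzu hzv).mp hm) hzu))
    have eM2 : z ∈ M2 z ↔ z ∈ g z := by
      rw [meM2 z z, xor_iff_left e2]; exact m1 z z hzu hzv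
    have e3 : ¬ (v ∈ M2 z ∧ z ∈ Cv) := by
      rintro ⟨htrig, hm⟩
      have hzv' : prec z v := hc2 z hzO hzu hzv htrig
      rcases xor_elim ((meCv z).mp hm) with hm' | ⟨hc, hm'⟩
      · exact h.irrefl z (h.trans z v z hzv'
          (h.g1 v hv z ((m1 v z hzu hzv).mp hm') hzv))
      · exact h.irrefl z (h.trans z u z (h.trans z v u hzv' (hvu hc))
          (h.g1 u hu z ((m1 u z hzu hzv).mp hm') hzu))
    rw [meM3 z z, xor_iff_left e3]
    exact eM2
  -- odd neighbourhood of `M3 z` in the pivoted graph, at vertices ≠ u, v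
  have oddM3 : ∀ z y, y ≠ u → y ≠ v →
      (y ∈ oddNbhd P (M3 z) ↔
        Xor' (y ∈ oddNbhd G (g z))
          (Xor' (u ∈ g1 z ∧ y ∈ oddNbhd G (g u))
            (v ∈ M2 z ∧ Xor' (y ∈ oddNbhd G (g v))
              (u ∈ g1 v ∧ y ∈ oddNbhd G (g u))))) := by
    intro z y hyu hyv
    have opg : ∀ t, y ∈ oddNbhd P (g1 t) ↔ y ∈ oddNbhd G (g t) :=
      fun t => oddPiv_gmod G u v w hN hw g t hyu hyv
    rw [hM3, mem_oddNbhd_symmDiff, mem_oddNbhd_cors, hM2, mem_oddNbhd_symmDiff,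
      mem_oddNbhd_cors, hCv, mem_oddNbhd_symmDiff, mem_oddNbhd_cors, opg, opg, opg]
    have ebeta : v ∈ (fun z => g1 z ∆ cors (u ∈ g1 z) (g1 u)) z ↔ v ∈ M2 z := Iff.rfl
    rw [ebeta]
    exact xor_assoc' _ _ _
  -- diagonal odd membership
  have hD2 : ∀ z, z ∉ O → z ≠ u → z ≠ v →
      (z ∈ oddNbhd P (M3 z) ↔ z ∈ oddNbhd G (g z)) := by
    intro z hzO hzu hzv
    have t1 : ¬ (u ∈ g1 z ∧ z ∈ oddNbhd G (g u)) := by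
      rintro ⟨hc, hm⟩
      exact h.irrefl z (h.trans z u z (hpu z hzO hzu hc) (h.g2 u hu z hm hzu))
    have t2 : ¬ (v ∈ M2 z ∧ Xor' (z ∈ oddNbhd G (g v))
        (u ∈ g1 v ∧ z ∈ oddNbhd G (g u))) := by
      rintro ⟨htrig, hX⟩
      have hzv' : prec z v := hc2 z hzO hzu hzv htrig
      rcases xor_elim hX with hm | ⟨hc, hm⟩
      · exact h.irrefl z (h.trans z v z hzv' (h.g2 v hv z hm hzv))
      · exact h.irrefl z (h.trans z u z (h.trans z v u hzv' (hvu hc))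
          (h.g2 u hu z hm hzu))
    rw [oddM3 z z hzu hzv, xor_iff_left (by
      intro hX
      rcases xor_elim hX with h1 | h2
      · exact t1 h1
      · exact t2 h2)]
  -- odd neighbourhood gives prec
  have hD1 : ∀ z, z ∉ O → z ≠ u → z ≠ v →
      ∀ y, y ≠ u → y ≠ v → y ≠ z → y ∈ oddNbhd P (M3 z) → prec z y := by
    intro z hzO hzu hzv y hyu hyv hyz hy
    rw [oddM3 z y hyu hyv] at hy
    rcases xor_elim hy with h1 | h2
    · exact h.g2 z hzO y h1 hyz
    · rcases xor_elim h2 with ⟨hc, hm⟩ | ⟨htrig, hX⟩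
      · exact h.trans z u y (hpu z hzO hzu hc) (h.g2 u hu y hm hyu)
      · have hzv' : prec z v := hc2 z hzO hzu hzv htrig
        rcases xor_elim hX with hm | ⟨hc, hm⟩
        · exact h.trans z v y hzv' (h.g2 v hv y hm hyv)
        · exact h.trans z u y (h.trans z v u hzv' (hvu hc)) (h.g2 u hu y hm hyu)
  -- the odd neighbourhood in the induced graph
  have indOdd : ∀ (K : Set V), (∀ y ∈ K, y ≠ u ∧ y ≠ v) → ∀ (x : ↥S),
      (x ∈ oddNbhd (P.induce S) (Subtype.val ⁻¹' K) ↔ x.val ∈ oddNbhd P K) := by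
    intro K hK x
    rw [mem_oddNbhd_iff, mem_oddNbhd_iff]
    have himg : Subtype.val '' ((Subtype.val ⁻¹' K) ∩ (P.induce S).neighborSet x)
        = K ∩ P.neighborSet x.val := by
      ext y
      constructor
      · rintro ⟨y', ⟨hy1, hy2⟩, rfl⟩
        exact ⟨hy1, hy2⟩
      · rintro ⟨hy1, hy2⟩
        exact ⟨⟨y, hK y hy1⟩, ⟨hy1, hy2⟩, rfl⟩
    rw [← himg, Set.ncard_image_of_injective _ Subtype.val_injective]
  have hKM3 : ∀ z, ∀ y ∈ M3 z, y ≠ u ∧ y ≠ v := by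
    intro z y hy
    exact ⟨fun e => hAu z (e ▸ hy), fun e => hAv z (e ▸ hy)⟩
  -- the gflow
  refine ⟨fun x => Subtype.val ⁻¹' (M3 x.val), fun a b => prec a.val b.val,
    ⟨fun a => h.irrefl a.val, fun a b c => h.trans a.val b.val c.val, ?_, ?_, ?_, ?_, ?_, ?_⟩⟩
  · -- noInput
    intro x hxO
    apply Set.eq_empty_iff_forall_notMem.mpr
    rintro y ⟨hy1, hy2⟩
    have hyuv := y.prop
    rcases hE x.val y.val hy1 hyuv.1 hyuv.2 with hg | hg | hg
    · exact Set.eq_empty_iff_forall_notMem.mp (h.noInput x.val hxO) y.val ⟨hg, hy2⟩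
    · exact Set.eq_empty_iff_forall_notMem.mp (h.noInput u hu) y.val ⟨hg, hy2⟩
    · exact Set.eq_empty_iff_forall_notMem.mp (h.noInput v hv) y.val ⟨hg, hy2⟩
  · -- g1
    intro x hxO y hy hyx
    exact hB x.val hxO x.prop.1 x.prop.2 y.val hy y.prop.1 y.prop.2
      (fun e => hyx (Subtype.ext e))
  · -- g2
    intro x hxO y hy hyx
    rw [indOdd (M3 x.val) (hKM3 x.val) y] at hy
    exact hD1 x.val hxO x.prop.1 x.prop.2 y.val y.prop.1 y.prop.2
      (fun e => hyx (Subtype.ext e)) hy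
  · -- gXY
    intro x hxO hl
    obtain ⟨h1, h2⟩ := h.gXY x.val hxO hl
    constructor
    · intro hm
      exact h1 ((hC x.val hxO x.prop.1 x.prop.2).mp hm)
    · rw [indOdd (M3 x.val) (hKM3 x.val) x]
      exact (hD2 x.val hxO x.prop.1 x.prop.2).mpr h2
  · -- gXZ
    intro x hxO hl
    obtain ⟨h1, h2⟩ := h.gXZ x.val hxO hl
    constructor
    · exact (hC x.val hxO x.prop.1 x.prop.2).mpr h1
    · rw [indOdd (M3 x.val) (hKM3 x.val) x]
      exact (hD2 x.val hxO x.prop.1 x.prop.2).mpr h2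
  · -- gYZ
    intro x hxO hl
    obtain ⟨h1, h2⟩ := h.gYZ x.val hxO hl
    constructor
    · exact (hC x.val hxO x.prop.1 x.prop.2).mpr h1
    · rw [indOdd (M3 x.val) (hKM3 x.val) x]
      intro hm
      exact h2 ((hD2 x.val hxO x.prop.1 x.prop.2).mp hm)
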